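/- Let R be a commutative Noetherian ring and I, J ideals of R with J ⊆ I. Suppose there exists an element e ∈ I² such that I = J + (e) and e lies in the radical of J. Then J = I. -/

import Mathlib

/-- If `J ⊆ I`, `e ∈ I²`, `I = J + (e)` and `e ∈ √J`, then `J = I`. -/
theorem stmt_2 {R : Type*} [CommRing R] [IsNoetherianRing R]
    (I J : Ideal R) (hJI : J ≤ I) (e : R) (he : e ∈ I ^ 2)
    (hI : I = J ⊔ Ideal.span {e}) (hrad : e ∈ J.radical) : J = I := by
  have hsq : I ^ 2 ≤ J ⊔ Ideal.span {e * e} := by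
    rw [hI, sq, Ideal.sup_mul, Ideal.mul_sup, Ideal.mul_sup,
      Ideal.span_singleton_mul_span_singleton]
    exact sup_le (sup_le (le_sup_left.trans' Ideal.mul_le_left)
      (le_sup_left.trans' Ideal.mul_le_left))
      (sup_le (le_sup_left.trans' Ideal.mul_le_right) le_sup_right)
  obtain ⟨j, hj, y, hy, hjy⟩ := Submodule.mem_sup.mp (hsq he)
  obtain ⟨r, hr⟩ := Ideal.mem_span_singleton.mp hy
  obtain ⟨n, hn⟩ := hrad
  have heJ : e ∈ J := by
    rw [← Ideal.Quotient.eq_zero_iff_mem]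
    have hxn : (Ideal.Quotient.mk J e) ^ n = 0 := by
      rw [← map_pow, Ideal.Quotient.eq_zero_iff_mem]; exact hn
    have hxeq : Ideal.Quotient.mk J e
        = Ideal.Quotient.mk J r * (Ideal.Quotient.mk J e) ^ 2 := by
      have h1 : e - e * e * r ∈ J := by
        rw [hr] at hjy
        have h2 : e - e * e * r = j := by linear_combination -hjy
        rwa [h2]
      have h3 := Ideal.Quotient.eq_zero_iff_mem.mpr h1
      rw [map_sub, map_mul, map_mul, sub_eq_zero] at h3
      linear_combination h3
    have key : ∀ k : ℕ, Ideal.Quotient.mk J e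
        = (Ideal.Quotient.mk J r) ^ k * (Ideal.Quotient.mk J e) ^ (k + 1) := by
      intro k
      induction k with
      | zero => simp
      | succ k ih =>
        calc Ideal.Quotient.mk J e
            = (Ideal.Quotient.mk J r) ^ k * (Ideal.Quotient.mk J e) ^ (k + 1) := ih
        _ = (Ideal.Quotient.mk J r) ^ k * (Ideal.Quotient.mk J e) ^ k
              * Ideal.Quotient.mk J e := by ring
        _ = (Ideal.Quotient.mk J r) ^ k * (Ideal.Quotient.mk J e) ^ k
              * (Ideal.Quotient.mk J r * (Ideal.Quotient.mk J e) ^ 2) := by rw [← hxeq]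
        _ = (Ideal.Quotient.mk J r) ^ (k + 1) * (Ideal.Quotient.mk J e) ^ (k + 2) := by ring
    have hfin := key n
    rw [pow_succ, hxn, zero_mul, mul_zero] at hfin
    exact hfin
  rw [hI]
  exact le_sup_left.antisymm (sup_le le_rfl ((Ideal.span_singleton_le_iff_mem J).mpr heJ))
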